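/- Assume Hypothesis (HA), let k ≥ 1 be a natural number such that σ_per(P) = {λ e^{2πi j/k} : j = 0, 1, …, k−1}, and let g_0, …, g_{k−1} : M → [0,∞) be linearly independent continuous functions with pairwise disjoint supports {g_i > 0}, whose complex span equals ker(P^k − λ^k) in L^∞(M,μ;ℂ), and with ∫_M g_i dμ = μ({g > 0}) for each i. Then the functions can be relabelled so that P g_i = λ g_{i−1 (mod k)} for every i ∈ {0,…,k−1}; moreover, with this labelling, g = (1/k) Σ_{i=0}^{k−1} g_i. -/

import Mathlib

open MeasureTheory ProbabilityTheory Filter Topology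

namespace QEM

noncomputable section

variable {M : Type*} [MetricSpace M] [CompactSpace M] [MeasurableSpace M] [BorelSpace M]

/-- The weighted Koopman operator on real-valued functions:
`P f (x) = e^{φ(x)} ∫ f(y) κ(x,dy)`. -/
def PR (φ : M → ℝ) (κ : Kernel M M) (f : M → ℝ) : M → ℝ :=
  fun x => Real.exp (φ x) * ∫ y, f y ∂(κ x)

/-- The weighted Koopman operator on complex-valued functions
(`P f := P(Re f) + i P(Im f)`, equivalently with the complex Bochner integral). -/
def PC (φ : M → ℝ) (κ : Kernel M M) (f : M → ℂ) : M → ℂ :=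
  fun x => (Real.exp (φ x) : ℂ) * ∫ y, f y ∂(κ x)

/-- Bounded measurable real-valued functions. -/
def BddMeas (f : M → ℝ) : Prop := Measurable f ∧ ∃ C : ℝ, ∀ x, |f x| ≤ C

/-- Bounded measurable complex-valued functions. -/
def BddMeasC (f : M → ℂ) : Prop := Measurable f ∧ ∃ C : ℝ, ∀ x, ‖f x‖ ≤ C

/-- The operator `P_g f := P (1_{g>0} · f)`. -/
def Pg (φ : M → ℝ) (κ : Kernel M M) (g : M → ℝ) : (M → ℝ) → (M → ℝ) :=
  fun f => PR φ κ (Set.indicator {x | 0 < g x} f)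

/-- Complex version of `P_g`. -/
def PgC (φ : M → ℝ) (κ : Kernel M M) (g : M → ℝ) : (M → ℂ) → (M → ℂ) :=
  fun f => PC φ κ (Set.indicator {x | 0 < g x} f)

/-- The indicator function of `{g > 0}`. -/
def oneG (g : M → ℝ) : M → ℝ := Set.indicator {x | 0 < g x} (fun _ => (1 : ℝ))

/-- The normalized restriction `μ̃` of `μ` to `{g > 0}`, i.e.
`μ̃(A) = μ(A ∩ {g>0}) / μ({g>0})`. -/
def mtilde (μ : Measure M) (g : M → ℝ) : Measure M :=
  (μ {x | 0 < g x})⁻¹ • μ.restrict {x | 0 < g x}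

/-- The root-of-unity phase `e^{2πi j/k}`. -/
def rootU (k j : ℕ) : ℂ := Complex.exp (2 * (Real.pi : ℂ) * Complex.I * (j : ℂ) / (k : ℂ))

/-- Basic standing setup: `μ` is a fully supported Borel probability measure, `κ` a
sub-Markov kernel with `κ(x,·) ≪ μ` for all `x`, and `φ` a (bounded) continuous function. -/
structure Setup (μ : Measure M) (κ : Kernel M M) (φ : M → ℝ) : Prop where
  prob : IsProbabilityMeasure μ
  fullSupp : ∀ U : Set M, IsOpen U → U.Nonempty → 0 < μ U
  subMarkov : ∀ x, κ x Set.univ ≤ 1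
  ac : ∀ x, κ x ≪ μ
  contφ : Continuous φ

/-- Hypothesis (HA): (i) `P` is strong Feller; (ii) `lam > 0` equals the spectral radius of the
induced operator `T` on `L^∞(M,μ;ℂ)` (where `T` agrees a.e. with the pointwise operator `P` on
bounded measurable representatives); (iii) the eigenspace of `P` at `lam` in `L^∞(M,μ)` is
one-dimensional, spanned by a continuous nonnegative `g ≢ 0` with `P g = lam·g` and
`∫ g dμ = μ {g>0}`; (iv) `P^*μ = lam·μ`. -/
structure HypHA (μ : Measure M) (κ : Kernel M M) (φ : M → ℝ)
    (T : Lp ℂ ⊤ μ →L[ℂ] Lp ℂ ⊤ μ) (lam : ℝ) (g : M → ℝ) : Prop where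
  setup : Setup μ κ φ
  strongFeller : ∀ f : M → ℝ, BddMeas f → Continuous (PR φ κ f)
  lam_pos : 0 < lam
  Tcompat : ∀ f : M → ℂ, BddMeasC f → ∀ F : Lp ℂ ⊤ μ, ⇑F =ᵐ[μ] f →
      ⇑(T F) =ᵐ[μ] PC φ κ f
  specRad : spectralRadius ℂ T = ENNReal.ofReal lam
  g_cont : Continuous g
  g_nonneg : ∀ x, 0 ≤ g x
  g_ne : g ≠ 0
  g_eigen : PR φ κ g = fun x => lam * g x
  g_int : ∫ x, g x ∂μ = (μ {x | 0 < g x}).toReal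
  eigen_dim : ∀ f : M → ℝ, BddMeas f → PR φ κ f =ᵐ[μ] (fun x => lam * f x) →
      ∃ c : ℝ, f =ᵐ[μ] fun x => c * g x
  Pstar : ∀ f : M → ℝ, BddMeas f → ∫ x, PR φ κ f x ∂μ = lam * ∫ x, f x ∂μ

/-- Membership in the point peripheral spectrum `σ_per(P)`:
`|α| = lam` and `P f = α f` for some nonzero `f ∈ L^∞(M,μ;ℂ)`. -/
def PerSpec (μ : Measure M) (κ : Kernel M M) (φ : M → ℝ) (lam : ℝ) (α : ℂ) : Prop :=
  ‖α‖ = lam ∧ ∃ f : M → ℂ, BddMeasC f ∧ ¬ (f =ᵐ[μ] 0) ∧ PC φ κ f =ᵐ[μ] fun x => α * f x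

/-- `σ_per(P) = {lam·e^{2πi j/k} : j = 0, …, k-1}`. -/
def PerSpecEq (μ : Measure M) (κ : Kernel M M) (φ : M → ℝ) (lam : ℝ) (k : ℕ) : Prop :=
  ∀ α : ℂ, PerSpec μ κ φ lam α ↔ ∃ j : ℕ, j < k ∧ α = (lam : ℂ) * rootU k j

/-- A family of `k` linearly independent, nonnegative, continuous functions with pairwise
disjoint supports, spanning `ker(P^k - lam^k)` in `L^∞(M,μ;ℂ)`, each of integral `μ {g>0}`. -/
structure PreFamily (μ : Measure M) (κ : Kernel M M) (φ : M → ℝ) (lam : ℝ) (g : M → ℝ)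
    (k : ℕ) (gi : Fin k → M → ℝ) : Prop where
  cont : ∀ i, Continuous (gi i)
  nonneg : ∀ i x, 0 ≤ gi i x
  indep : LinearIndependent ℝ gi
  span_ker : ∀ f : M → ℂ, BddMeasC f →
      (((PC φ κ)^[k] f) =ᵐ[μ] fun x => (lam : ℂ) ^ k * f x) ↔
        ∃ c : Fin k → ℂ, f =ᵐ[μ] fun x => ∑ i, c i * (gi i x : ℂ)
  integral : ∀ i, ∫ x, gi i x ∂μ = (μ {x | 0 < g x}).toReal
  disj : ∀ i j, i ≠ j → ∀ x, ¬ (0 < gi i x ∧ 0 < gi j x)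

/-- The cyclic family hypothesis: nonnegative continuous `g_0, …, g_{k-1}` supported in `{g>0}`
with pairwise disjoint supports, spanning `ker(P^k - lam^k)` in `L^∞(M,μ;ℂ)`, with
`∫ g_i dμ = μ {g>0}`, `P g_i = lam·g_{i-1 (mod k)}` and `g = (1/k) ∑ g_i`. -/
structure CyclicFamily (μ : Measure M) (κ : Kernel M M) (φ : M → ℝ) (lam : ℝ) (g : M → ℝ)
    (k : ℕ) [NeZero k] (gi : Fin k → M → ℝ) : Prop where
  cont : ∀ i, Continuous (gi i)
  nonneg : ∀ i x, 0 ≤ gi i x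
  supported : ∀ i x, 0 < gi i x → 0 < g x
  disj : ∀ i j, i ≠ j → ∀ x, ¬ (0 < gi i x ∧ 0 < gi j x)
  span_ker : ∀ f : M → ℂ, BddMeasC f →
      (((PC φ κ)^[k] f) =ᵐ[μ] fun x => (lam : ℂ) ^ k * f x) ↔
        ∃ c : Fin k → ℂ, f =ᵐ[μ] fun x => ∑ i, c i * (gi i x : ℂ)
  integral : ∀ i, ∫ x, gi i x ∂μ = (μ {x | 0 < g x}).toReal
  cycle : ∀ i : Fin k, PR φ κ (gi i) = fun x => lam * gi (i - 1) x
  avg : g = fun x => (1 / (k : ℝ)) * ∑ i, gi i x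

/-- The spectral decomposition hypothesis: a closed `P_g`-invariant subspace `V` of
`L^∞({g>0},μ;ℂ)` with `L^∞({g>0},μ;ℂ) = span{g_0,…,g_{k-1}} ⊕ V` and such that the spectral
radius of `P_g` restricted to `V` is `< lam` (expressed through a geometric bound on the
iterates, via Gelfand's formula). -/
structure SpecDecomp (μ : Measure M) (κ : Kernel M M) (φ : M → ℝ) (lam : ℝ) (g : M → ℝ)
    (k : ℕ) (gi : Fin k → M → ℝ) (V : Submodule ℂ (M → ℂ)) : Prop where
  meas : ∀ v ∈ V, Measurable v
  bdd : ∀ v ∈ V, ∃ C : ℝ, ∀ x, ‖v x‖ ≤ C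
  supp : ∀ v ∈ V, ∀ x, ¬ 0 < g x → v x = 0
  invariant : ∀ v ∈ V, PgC φ κ g v ∈ V
  closed : ∀ (u : ℕ → M → ℂ) (f : M → ℂ), (∀ n, u n ∈ V) → Measurable f →
      (∃ C : ℝ, ∀ x, ‖f x‖ ≤ C) → (∀ x, ¬ 0 < g x → f x = 0) →
      Tendsto (fun n => eLpNorm (u n - f) ⊤ μ) atTop (nhds 0) → f ∈ V
  decomp : ∀ f : M → ℂ, BddMeasC f → (∀ x, ¬ 0 < g x → f x = 0) →
      ∃ c : Fin k → ℂ, ∃ v ∈ V, f = fun x => (∑ i, c i * (gi i x : ℂ)) + v x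
  unique : ∀ c : Fin k → ℂ, (fun x => ∑ i, c i * (gi i x : ℂ)) ∈ V → c = 0
  gap : ∃ r : ℝ, 0 ≤ r ∧ r < lam ∧ ∃ C : ℝ, ∀ n : ℕ, ∀ v ∈ V,
      eLpNorm ((PgC φ κ g)^[n] v) ⊤ μ ≤ ENNReal.ofReal (C * r ^ n) * eLpNorm v ⊤ μ

/-- The operator `P^{k+1} - lam^{k+1}` on complex-valued functions. -/
def Qop (φ : M → ℝ) (κ : Kernel M M) (lam : ℝ) (k : ℕ) : (M → ℂ) → (M → ℂ) :=
  fun h x => (PC φ κ)^[k + 1] h x - (lam : ℂ) ^ (k + 1) * h x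

section Helpers

set_option linter.unusedSectionVars false

variable {M : Type*} [MetricSpace M] [CompactSpace M] [MeasurableSpace M] [BorelSpace M]

lemma bddMeas_of_continuous {f : M → ℝ} (hf : Continuous f) : BddMeas f := by
  refine ⟨hf.measurable, ?_⟩
  obtain ⟨C, hC⟩ := (isCompact_range hf.abs).bddAbove
  exact ⟨C, fun x => hC ⟨x, rfl⟩⟩

lemma bddMeasC_of_continuous {f : M → ℂ} (hf : Continuous f) : BddMeasC f := by
  refine ⟨hf.measurable, ?_⟩
  obtain ⟨C, hC⟩ := (isCompact_range hf.norm).bddAbove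
  exact ⟨C, fun x => hC ⟨x, rfl⟩⟩

lemma eq_of_ae_eq_cont {μ : Measure M} (hfull : ∀ U : Set M, IsOpen U → U.Nonempty → 0 < μ U)
    {E : Type*} [TopologicalSpace E] [T2Space E] {f h : M → E}
    (hf : Continuous f) (hh : Continuous h) (hae : f =ᵐ[μ] h) : f = h := by
  by_contra hne
  obtain ⟨x, hx⟩ := Function.ne_iff.mp hne
  have hopen : IsOpen {y | f y ≠ h y} := by
    have hcl : IsClosed {y | f y = h y} := isClosed_eq hf hh
    simpa [Set.compl_setOf] using hcl.isOpen_compl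
  have hpos := hfull _ hopen ⟨x, hx⟩
  have h0 : μ {y | f y ≠ h y} = 0 := by
    exact ae_iff.mp hae
  simp [h0] at hpos

lemma integrable_of_bddMeas {E : Type*} [NormedAddCommGroup E] [MeasurableSpace E] [BorelSpace E]
    [SecondCountableTopology E]
    {ν : Measure M} [IsFiniteMeasure ν]
    {f : M → E} (hm : Measurable f) (hb : ∃ C, ∀ x, ‖f x‖ ≤ C) : Integrable f ν := by
  obtain ⟨C, hC⟩ := hb
  exact (integrable_const C).mono' hm.aestronglyMeasurable (ae_of_all _ hC)

lemma PC_congr_ae {μ : Measure M} {κ : Kernel M M} (hac : ∀ x, κ x ≪ μ) (φ : M → ℝ)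
    {f h : M → ℂ} (hae : f =ᵐ[μ] h) : PC φ κ f = PC φ κ h := by
  funext x
  simp only [PC]
  congr 1
  exact integral_congr_ae (hae.filter_mono (hac x).ae_le)

lemma PC_mul (φ : M → ℝ) (κ : Kernel M M) (c : ℂ) (f : M → ℂ) :
    PC φ κ (fun x => c * f x) = fun x => c * PC φ κ f x := by
  funext x
  simp only [PC, integral_const_mul]
  ring

lemma PC_ofReal (φ : M → ℝ) (κ : Kernel M M) (f : M → ℝ) :
    PC φ κ (fun x => (f x : ℂ)) = fun x => ((PR φ κ f x : ℝ) : ℂ) := by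
  funext x
  simp only [PC, PR]
  rw [show (∫ (y : M), ((f y : ℝ) : ℂ) ∂(κ x)) = ((∫ (y : M), f y ∂(κ x) : ℝ) : ℂ) from
    integral_ofReal]
  push_cast
  ring

lemma PC_sum (φ : M → ℝ) (κ : Kernel M M) {ι : Type*} (s : Finset ι) (F : ι → M → ℂ)
    (hi : ∀ x, ∀ i ∈ s, Integrable (F i) (κ x)) :
    PC φ κ (fun x => ∑ i ∈ s, F i x) = fun x => ∑ i ∈ s, PC φ κ (F i) x := by
  funext x
  simp only [PC, integral_finset_sum s (hi x), Finset.mul_sum]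

lemma PR_nonneg (φ : M → ℝ) (κ : Kernel M M) {f : M → ℝ} (hf : ∀ x, 0 ≤ f x) :
    ∀ x, 0 ≤ PR φ κ f x :=
  fun _ => mul_nonneg (Real.exp_pos _).le (integral_nonneg hf)

lemma rootU_pow (k j n : ℕ) :
    rootU k j ^ n = Complex.exp (2 * (Real.pi : ℂ) * Complex.I * (j * n : ℕ) / k) := by
  rw [rootU, ← Complex.exp_nat_mul]
  congr 1
  push_cast
  ring

lemma norm_rootU (k j : ℕ) : ‖rootU k j‖ = 1 := by
  have h : (2 * (Real.pi : ℂ) * Complex.I * (j : ℂ) / (k : ℂ))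
      = ((2 * Real.pi * j / k : ℝ) : ℂ) * Complex.I := by
    push_cast
    ring
  rw [rootU, h, Complex.norm_exp_ofReal_mul_I]

lemma rootU_pow_self {k : ℕ} (hk : k ≠ 0) (j : ℕ) : rootU k j ^ k = 1 := by
  rw [rootU_pow]
  have hkC : (k : ℂ) ≠ 0 := Nat.cast_ne_zero.mpr hk
  have h : 2 * (Real.pi : ℂ) * Complex.I * ((j * k : ℕ) : ℂ) / k
      = (j : ℕ) * (2 * (Real.pi : ℂ) * Complex.I) := by
    push_cast
    field_simp
  rw [h]
  exact Complex.exp_nat_mul_two_pi_mul_I j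

lemma two_pi_I_ne_zero : (2 * (Real.pi : ℂ) * Complex.I) ≠ 0 := by
  simp [Real.pi_ne_zero, Complex.I_ne_zero, Complex.ofReal_ne_zero]

lemma dvd_of_rootU_pow {k : ℕ} (hk2 : 2 ≤ k) {n : ℕ} (h : rootU k 1 ^ n = 1) : k ∣ n := by
  rw [rootU_pow] at h
  obtain ⟨m, hm⟩ := Complex.exp_eq_one_iff.mp h
  have hkC : (k : ℂ) ≠ 0 := Nat.cast_ne_zero.mpr (by omega)
  have hmul := congrArg (fun z => z * (k : ℂ)) hm
  simp only [div_mul_cancel₀ _ hkC] at hmul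
  have h2 : (2 * (Real.pi : ℂ) * Complex.I) * ((1 * n : ℕ) : ℂ)
      = (2 * (Real.pi : ℂ) * Complex.I) * ((m * k : ℤ) : ℂ) := by
    push_cast at hmul ⊢
    ring_nf at hmul ⊢
    linear_combination hmul
  have h3 : ((1 * n : ℕ) : ℂ) = ((m * k : ℤ) : ℂ) := mul_left_cancel₀ two_pi_I_ne_zero h2
  have h4 : ((1 * n : ℕ) : ℤ) = m * k := by exact_mod_cast h3
  have h5 : (k : ℤ) ∣ (n : ℤ) := ⟨m, by rw [mul_comm]; omega⟩
  exact_mod_cast h5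

lemma rootU_injOn {k : ℕ} (hk : k ≠ 0) {j1 j2 : ℕ} (h1 : j1 < k) (h2 : j2 < k)
    (h : rootU k j1 = rootU k j2) : j1 = j2 := by
  rw [rootU, rootU] at h
  obtain ⟨m, hm⟩ := Complex.exp_eq_exp_iff_exists_int.mp h
  have hkC : (k : ℂ) ≠ 0 := Nat.cast_ne_zero.mpr hk
  have hmul := congrArg (fun z => z * (k : ℂ)) hm
  simp only [add_mul, div_mul_cancel₀ _ hkC] at hmul
  have h2' : (2 * (Real.pi : ℂ) * Complex.I) * (j1 : ℂ)
      = (2 * (Real.pi : ℂ) * Complex.I) * (((j2 : ℤ) + m * k : ℤ) : ℂ) := by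
    push_cast at hmul ⊢
    ring_nf at hmul ⊢
    linear_combination hmul
  have h3 : ((j1 : ℤ) : ℂ) = (((j2 : ℤ) + m * k : ℤ) : ℂ) := by
    have := mul_left_cancel₀ two_pi_I_ne_zero h2'
    exact_mod_cast this
  have h4 : (j1 : ℤ) = (j2 : ℤ) + m * k := by exact_mod_cast h3
  have hmk : m * k = (j1 : ℤ) - j2 := by linarith
  have hj1k : (j1 : ℤ) < k := by exact_mod_cast h1
  have hj2k : (j2 : ℤ) < k := by exact_mod_cast h2
  have hj10 : (0 : ℤ) ≤ j1 := Int.ofNat_nonneg j1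
  have hj20 : (0 : ℤ) ≤ j2 := Int.ofNat_nonneg j2
  rcases lt_trichotomy m 0 with hm0 | hm0 | hm0
  · have hle : m * k ≤ (-1) * k := by
      have hm1 : m ≤ -1 := by omega
      have hk0 : (0 : ℤ) ≤ k := Int.ofNat_nonneg k
      exact mul_le_mul_of_nonneg_right hm1 hk0
    have hF : False := by linarith
    exact hF.elim
  · rw [hm0, zero_mul] at hmk
    omega
  · have hle : (1 : ℤ) * k ≤ m * k := by
      have hm1 : (1 : ℤ) ≤ m := by omega
      have hk0 : (0 : ℤ) ≤ k := Int.ofNat_nonneg k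
      exact mul_le_mul_of_nonneg_right hm1 hk0
    have hF : False := by linarith
    exact hF.elim

lemma fin_sub_one_val {k : ℕ} [NeZero k] (i : Fin k) :
    (i - 1).val = if i.val = 0 then k - 1 else i.val - 1 := by
  rcases k with _ | n
  · exact absurd rfl (NeZero.ne 0)
  · rw [Fin.coe_sub_one]
    by_cases h : (i : ℕ) = 0
    · have hi : i = 0 := Fin.ext h
      rw [if_pos hi, if_pos h]
      omega
    · have hi : i ≠ 0 := fun e => h (by simp [e])
      rw [if_neg hi, if_neg h]

end Helpers


/-- **Lemma A.6.** Under Hypothesis (HA) with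
`σ_per(P) = {lam e^{2πi j/k}}_{j<k}`, a family as in the conclusion of Proposition A.5 can be
relabelled so that `P g_i = lam g_{i-1 (mod k)}`, and then `g = (1/k) ∑ g_i`. -/
theorem statement7 (μ : Measure M) (κ : Kernel M M) (φ : M → ℝ)
    (T : Lp ℂ ⊤ μ →L[ℂ] Lp ℂ ⊤ μ) (lam : ℝ) (g : M → ℝ)
    (hHA : HypHA μ κ φ T lam g)
    (k : ℕ) [NeZero k] (hk : PerSpecEq μ κ φ lam k)
    (gi : Fin k → M → ℝ) (hgi : PreFamily μ κ φ lam g k gi) :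
    ∃ σ : Equiv.Perm (Fin k),
      (∀ i : Fin k, PR φ κ (gi (σ i)) = fun x => lam * gi (σ (i - 1)) x) ∧
      g = fun x => (1 / (k : ℝ)) * ∑ i, gi (σ i) x := by
  classical
  haveI := hHA.setup.prob
  have hac := hHA.setup.ac
  have hfull := hHA.setup.fullSupp
  have kpos : 0 < k := Nat.pos_of_ne_zero (NeZero.ne k)
  have hκfin : ∀ x, IsFiniteMeasure (κ x) := fun x =>
    ⟨lt_of_le_of_lt (hHA.setup.subMarkov x) ENNReal.one_lt_top⟩
  -- basic properties of the `gi`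
  have hgiBdd : ∀ i, BddMeas (gi i) := fun i => bddMeas_of_continuous (hgi.cont i)
  have hgiCcont : ∀ i, Continuous (fun x => (gi i x : ℂ)) := fun i =>
    Complex.continuous_ofReal.comp (hgi.cont i)
  have hgiκInt : ∀ (x : M) (i : Fin k), Integrable (fun y => (gi i y : ℂ)) (κ x) := by
    intro x i
    haveI := hκfin x
    refine integrable_of_bddMeas (hgiCcont i).measurable ?_
    obtain ⟨C, hC⟩ := (hgiBdd i).2
    exact ⟨C, fun y => by simpa using hC y⟩
  have hgiInt : ∀ i, Integrable (gi i) μ := fun i =>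
    integrable_of_bddMeas (hgiBdd i).1 (by simpa [Real.norm_eq_abs] using (hgiBdd i).2)
  -- positivity of the common mass
  have hgne : ∃ x, 0 < g x := by
    obtain ⟨x, hx⟩ := Function.ne_iff.mp hHA.g_ne
    exact ⟨x, lt_of_le_of_ne (hHA.g_nonneg x) (Ne.symm hx)⟩
  have hmpos : 0 < (μ {x | 0 < g x}).toReal := by
    have hgopen : IsOpen {x | 0 < g x} := isOpen_lt continuous_const hHA.g_cont
    have h1 : 0 < μ {x | 0 < g x} := hfull _ hgopen hgne
    exact ENNReal.toReal_pos h1.ne' (measure_ne_top μ _)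
  -- support points
  have hxex : ∀ j, ∃ x, 0 < gi j x := by
    intro j
    have hne : gi j ≠ 0 := hgi.indep.ne_zero j
    obtain ⟨x, hx⟩ := Function.ne_iff.mp hne
    exact ⟨x, lt_of_le_of_ne (hgi.nonneg j x) (Ne.symm hx)⟩
  choose xp hxp using hxex
  have hvan : ∀ j l, l ≠ j → gi l (xp j) = 0 := by
    intro j l hlj
    have hdisj := hgi.disj l j hlj (xp j)
    by_contra h
    exact hdisj ⟨lt_of_le_of_ne (hgi.nonneg l (xp j)) (Ne.symm h), hxp j⟩
  have hgiCne : ∀ j, ((gi j (xp j) : ℝ) : ℂ) ≠ 0 := fun j => by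
    exact_mod_cast (hxp j).ne'
  have hext : ∀ (c : Fin k → ℂ) (j : Fin k),
      (∑ l, c l * ((gi l (xp j) : ℝ) : ℂ)) = c j * ((gi j (xp j) : ℝ) : ℂ) := by
    intro c j
    refine Finset.sum_eq_single j (fun l _ hlj => by simp [hvan j l hlj]) (by simp)
  have hcoeff : ∀ c d : Fin k → ℂ,
      ((fun x => ∑ l, c l * ((gi l x : ℝ) : ℂ)) = fun x => ∑ l, d l * ((gi l x : ℝ) : ℂ)) →
      c = d := by
    intro c d hcd
    funext j
    have h1 := congrFun hcd (xp j)
    simp only [hext] at h1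
    exact mul_right_cancel₀ (hgiCne j) h1
  have hsumCont : ∀ c : Fin k → ℂ, Continuous fun x => ∑ l, c l * ((gi l x : ℝ) : ℂ) :=
    fun c => continuous_finset_sum _ fun l _ => continuous_const.mul (hgiCcont l)
  have hPRcont : ∀ i, Continuous (PR φ κ (gi i)) := fun i => hHA.strongFeller _ (hgiBdd i)
  have hrep : ∀ i, PC φ κ (fun x => ((gi i x : ℝ) : ℂ)) = fun x => ((PR φ κ (gi i) x : ℝ) : ℂ) :=
    fun i => PC_ofReal φ κ (gi i)
  -- each gi lies in ker (P^k - lam^k)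
  have hkerg : ∀ i, (PC φ κ)^[k] (fun x => ((gi i x : ℝ) : ℂ))
      =ᵐ[μ] fun x => (lam : ℂ) ^ k * ((gi i x : ℝ) : ℂ) := by
    intro i
    refine (hgi.span_ker (fun x => ((gi i x : ℝ) : ℂ))).mpr
      ⟨Pi.single i 1, ae_of_all _ fun x => ?_⟩ (bddMeasC_of_continuous (hgiCcont i))
    simp [Pi.single_apply, ite_mul]
  -- matrix representation of P on the span
  have key : ∀ i, ∃ c : Fin k → ℂ,
      PC φ κ (fun x => ((gi i x : ℝ) : ℂ)) = fun x => ∑ l, c l * ((gi l x : ℝ) : ℂ) := by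
    intro i
    have hbdd : BddMeasC (PC φ κ fun x => ((gi i x : ℝ) : ℂ)) := by
      rw [hrep i]
      exact bddMeasC_of_continuous (Complex.continuous_ofReal.comp (hPRcont i))
    have hcomm : (PC φ κ)^[k] (PC φ κ fun x => ((gi i x : ℝ) : ℂ))
        = PC φ κ ((PC φ κ)^[k] fun x => ((gi i x : ℝ) : ℂ)) := by
      rw [← Function.iterate_succ_apply, Function.iterate_succ_apply']
    have hiter : (PC φ κ)^[k] (PC φ κ fun x => ((gi i x : ℝ) : ℂ))
        =ᵐ[μ] fun x => (lam : ℂ) ^ k * PC φ κ (fun x => ((gi i x : ℝ) : ℂ)) x := by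
      rw [hcomm, PC_congr_ae hac φ (hkerg i), PC_mul]
    obtain ⟨c, hc⟩ := (hgi.span_ker _).mp (fun _ => hiter)
    refine ⟨c, eq_of_ae_eq_cont hfull ?_ (hsumCont c) hc⟩
    rw [hrep i]
    exact Complex.continuous_ofReal.comp (hPRcont i)
  choose cM hcM using key
  set a : Fin k → Fin k → ℝ := fun i j => PR φ κ (gi i) (xp j) / gi j (xp j) with ha_def
  have hcMfun : ∀ i, (fun x => ((PR φ κ (gi i) x : ℝ) : ℂ))
      = fun x => ∑ l, cM i l * ((gi l x : ℝ) : ℂ) := by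
    intro i
    rw [← hrep i]
    exact hcM i
  have hcMa : ∀ i j, cM i j = ((a i j : ℝ) : ℂ) := by
    intro i j
    have h2 := congrFun (hcMfun i) (xp j)
    rw [hext] at h2
    have h3 : cM i j = ((PR φ κ (gi i) (xp j) : ℝ) : ℂ) / ((gi j (xp j) : ℝ) : ℂ) := by
      rw [eq_div_iff (hgiCne j)]
      exact h2.symm
    rw [h3, ha_def, ← Complex.ofReal_div]
  have hPRrep : ∀ i, PR φ κ (gi i) = fun x => ∑ j, a i j * gi j x := by
    intro i
    funext x
    have h2 := congrFun (hcMfun i) x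
    simp only [hcMa] at h2
    have h3 : ((PR φ κ (gi i) x : ℝ) : ℂ) = ((∑ l, a i l * gi l x : ℝ) : ℂ) := by
      rw [h2]
      push_cast
      ring
    exact_mod_cast h3
  have hanonneg : ∀ i j, 0 ≤ a i j := fun i j =>
    div_nonneg (PR_nonneg φ κ (hgi.nonneg i) (xp j)) (hxp j).le
  have hrow : ∀ i, ∑ j, a i j = lam := by
    intro i
    have h1 : ∫ x, PR φ κ (gi i) x ∂μ = lam * (μ {x | 0 < g x}).toReal := by
      rw [hHA.Pstar _ (hgiBdd i), hgi.integral i]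
    have h2 : ∫ x, PR φ κ (gi i) x ∂μ = ∑ j, a i j * (μ {x | 0 < g x}).toReal := by
      rw [hPRrep i]
      rw [integral_finset_sum _ (fun j _ => (hgiInt j).const_mul _)]
      refine Finset.sum_congr rfl fun j _ => ?_
      rw [integral_const_mul, hgi.integral j]
    have h3 : (∑ j, a i j) * (μ {x | 0 < g x}).toReal
        = lam * (μ {x | 0 < g x}).toReal := by
      rw [Finset.sum_mul, ← h2, h1]
    exact mul_right_cancel₀ hmpos.ne' h3
  -- eigenvectors of the coefficient matrix from the peripheral spectrum
  have hEigen : ∀ j : Fin k, ∃ c : Fin k → ℂ, c ≠ 0 ∧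
      ∀ mi : Fin k, ∑ l, ((a l mi : ℝ) : ℂ) * c l = ((lam : ℂ) * rootU k (j : ℕ)) * c mi := by
    intro j
    obtain ⟨-, f, hfB, hfne, hfeig⟩ := (hk ((lam : ℂ) * rootU k (j : ℕ))).mpr ⟨j, j.isLt, rfl⟩
    set α := (lam : ℂ) * rootU k (j : ℕ) with hα
    have hPCf : PC φ κ (PC φ κ f) = fun x => α * PC φ κ f x := by
      rw [PC_congr_ae hac φ hfeig, PC_mul]
    have hiter : ∀ n, (PC φ κ)^[n + 1] f = fun x => α ^ n * PC φ κ f x := by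
      intro n
      induction n with
      | zero => funext x; simp
      | succ n ih =>
        rw [Function.iterate_succ_apply', ih, PC_mul φ κ (α ^ n) (PC φ κ f)]
        funext x
        simp only [hPCf]
        ring
    have hfk : (PC φ κ)^[k] f =ᵐ[μ] fun x => (lam : ℂ) ^ k * f x := by
      have hk1 : k - 1 + 1 = k := Nat.succ_pred_eq_of_pos kpos
      have h1 : (PC φ κ)^[k] f = fun x => α ^ (k - 1) * PC φ κ f x := by
        rw [← hk1]
        exact hiter (k - 1)
      rw [h1]
      filter_upwards [hfeig] with x hx
      rw [hx]
      have h2 : α ^ (k - 1) * (α * f x) = α ^ k * f x := by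
        have h2' : α ^ (k - 1) * α = α ^ k := by rw [← pow_succ, hk1]
        rw [← h2']
        ring
      rw [h2, hα, mul_pow, rootU_pow_self (NeZero.ne k) (j : ℕ), mul_one]
    obtain ⟨c, hc⟩ := (hgi.span_ker f).mp (fun _ => hfk)
    have hcne : c ≠ 0 := by
      rintro rfl
      apply hfne
      refine hc.trans (ae_of_all _ fun x => ?_)
      simp
    refine ⟨c, hcne, ?_⟩
    have hPCsum : PC φ κ (fun x => ∑ l, c l * ((gi l x : ℝ) : ℂ))
        = fun x => ∑ mi, (∑ l, ((a l mi : ℝ) : ℂ) * c l) * ((gi mi x : ℝ) : ℂ) := by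
      have h0 : PC φ κ (fun x => ∑ l, c l * ((gi l x : ℝ) : ℂ))
          = fun x => ∑ l, PC φ κ (fun y => c l * ((gi l y : ℝ) : ℂ)) x :=
        PC_sum φ κ Finset.univ _ (fun x l _ => by
          haveI := hκfin x
          exact (hgiκInt x l).const_mul _)
      rw [h0]
      funext x
      have h1 : ∀ l, PC φ κ (fun y => c l * ((gi l y : ℝ) : ℂ)) x
          = c l * ((PR φ κ (gi l) x : ℝ) : ℂ) := by
        intro l
        simp only [PC, PR]
        rw [integral_const_mul]
        rw [show (∫ y, ((gi l y : ℝ) : ℂ) ∂(κ x)) = ((∫ y, gi l y ∂(κ x) : ℝ) : ℂ) from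
          integral_ofReal]
        push_cast
        ring
      have h2 : ∀ l, PR φ κ (gi l) x = ∑ mi, a l mi * gi mi x := fun l =>
        congrFun (hPRrep l) x
      simp only [h1, h2]
      push_cast
      simp only [Finset.mul_sum, Finset.sum_mul]
      rw [Finset.sum_comm]
      exact Finset.sum_congr rfl fun mi _ => Finset.sum_congr rfl fun l _ => by ring
    have hcontPCf : Continuous (PC φ κ f) := by
      rw [PC_congr_ae hac φ hc, hPCsum]
      exact hsumCont _
    have hfeq : PC φ κ f =ᵐ[μ] fun x => ∑ mi, (α * c mi) * ((gi mi x : ℝ) : ℂ) := by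
      refine hfeig.trans ?_
      filter_upwards [hc] with x hx
      rw [hx, Finset.mul_sum]
      exact Finset.sum_congr rfl fun mi _ => by ring
    have heqfun : (fun x => ∑ mi, (∑ l, ((a l mi : ℝ) : ℂ) * c l) * ((gi mi x : ℝ) : ℂ))
        = fun x => ∑ mi, (α * c mi) * ((gi mi x : ℝ) : ℂ) := by
      refine eq_of_ae_eq_cont hfull (hsumCont _) (hsumCont _) ?_
      have hPCfc : PC φ κ f = fun x => ∑ mi, (∑ l, ((a l mi : ℝ) : ℂ) * c l)
          * ((gi mi x : ℝ) : ℂ) := by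
        rw [PC_congr_ae hac φ hc, hPCsum]
      rw [← hPCfc]
      exact hfeq
    exact fun mi => congrFun (hcoeff _ _ heqfun) mi
  -- the determinant of the coefficient matrix has modulus lam ^ k
  haveI : Nonempty (Fin k) := ⟨⟨0, kpos⟩⟩
  set Ac : Matrix (Fin k) (Fin k) ℂ := Matrix.of (fun i j => ((a i j : ℝ) : ℂ)) with hAc
  choose ev hev0 hevEq using hEigen
  have hasEig : ∀ j : Fin k,
      Module.End.HasEigenvector (Matrix.toLin' Ac.transpose) ((lam : ℂ) * rootU k (j : ℕ))
        (ev j) := by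
    intro j
    rw [Module.End.hasEigenvector_iff]
    refine ⟨?_, hev0 j⟩
    rw [Module.End.mem_eigenspace_iff]
    funext mi
    rw [Matrix.toLin'_apply]
    simp only [Matrix.mulVec, dotProduct, Matrix.transpose_apply, hAc, Matrix.of_apply,
      Pi.smul_apply, smul_eq_mul]
    exact hevEq j mi
  have hinjμ : Function.Injective (fun j : Fin k => (lam : ℂ) * rootU k (j : ℕ)) := by
    intro j1 j2 hj
    have hlamne : (lam : ℂ) ≠ 0 := by
      simp only [ne_eq, Complex.ofReal_eq_zero]
      exact hHA.lam_pos.ne'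
    have h2 := mul_left_cancel₀ hlamne hj
    exact Fin.ext (rootU_injOn (NeZero.ne k) j1.isLt j2.isLt h2)
  have hli := Module.End.eigenvectors_linearIndependent' (Matrix.toLin' Ac.transpose)
    (fun j : Fin k => (lam : ℂ) * rootU k (j : ℕ)) hinjμ ev hasEig
  have hcard : Fintype.card (Fin k) = Module.finrank ℂ (Fin k → ℂ) := by
    simp [Module.finrank_fin_fun]
  set b := basisOfLinearIndependentOfCardEqFinrank hli hcard with hb
  have hbj : ∀ j, b j = ev j := fun j => by
    rw [hb, coe_basisOfLinearIndependentOfCardEqFinrank]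
  have hdet1 : LinearMap.det (Matrix.toLin' Ac.transpose)
      = ∏ j : Fin k, ((lam : ℂ) * rootU k (j : ℕ)) := by
    rw [← LinearMap.det_toMatrix b]
    have hdiag : LinearMap.toMatrix b b (Matrix.toLin' Ac.transpose)
        = Matrix.diagonal (fun j : Fin k => (lam : ℂ) * rootU k (j : ℕ)) := by
      ext j1 j2
      rw [LinearMap.toMatrix_apply, hbj]
      have hmem := (hasEig j2).1
      rw [Module.End.mem_eigenspace_iff] at hmem
      rw [hmem, ← hbj j2, _root_.map_smul, Module.Basis.repr_self]
      simp only [Finsupp.smul_apply, Finsupp.smul_single, smul_eq_mul, mul_one,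
        Finsupp.single_apply, Matrix.diagonal_apply]
      by_cases h : j2 = j1
      · subst h; simp
      · simp [h, Ne.symm h]
    rw [hdiag, Matrix.det_diagonal]
  have hdetAbs : |(Matrix.of a).det| = lam ^ k := by
    have hmap : Ac = (Complex.ofRealHom : ℝ →+* ℂ).mapMatrix (Matrix.of a) := by
      ext i j
      simp [hAc]
    have h1 : Ac.det = (((Matrix.of a).det : ℝ) : ℂ) := by
      rw [hmap, ← RingHom.map_det]
      rfl
    have h2 : Ac.det = ∏ j : Fin k, ((lam : ℂ) * rootU k (j : ℕ)) := by
      rw [← Matrix.det_transpose, ← LinearMap.det_toLin', hdet1]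
    have h3 : ‖Ac.det‖ = lam ^ k := by
      rw [h2, norm_prod]
      have : ∀ j : Fin k, ‖(lam : ℂ) * rootU k (j : ℕ)‖ = lam := by
        intro j
        rw [norm_mul, Complex.norm_real, Real.norm_eq_abs, abs_of_pos hHA.lam_pos, norm_rootU, mul_one]
      simp only [this]
      simp [Finset.prod_const]
    rw [h1, Complex.norm_real, Real.norm_eq_abs] at h3
    exact h3
  -- Hadamard-type equality forces a permutation structure
  have hexp : lam ^ k ≤ ∑ σ : Equiv.Perm (Fin k), ∏ i, a i (σ i) := by
    rw [← hdetAbs, ← Matrix.det_transpose]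
    rw [Matrix.det_apply']
    refine (Finset.abs_sum_le_sum_abs _ _).trans ?_
    refine Finset.sum_le_sum fun σ _ => ?_
    have hprodnn : (0 : ℝ) ≤ ∏ i, a i (σ i) :=
      Finset.prod_nonneg fun i _ => hanonneg i (σ i)
    have habs : |(((Equiv.Perm.sign σ : ℤ)) : ℝ)| = 1 := by
      rcases Int.units_eq_one_or (Equiv.Perm.sign σ) with h | h <;> simp [h]
    have htr2 : (∏ i, (Matrix.of a).transpose (σ i) i) = ∏ i, a i (σ i) :=
      Finset.prod_congr rfl fun i _ => rfl
    rw [abs_mul, habs, one_mul, htr2, abs_of_nonneg hprodnn]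
  have hall : ∑ p ∈ Fintype.piFinset (fun _ : Fin k => (Finset.univ : Finset (Fin k))),
      ∏ i, a i (p i) = lam ^ k := by
    rw [Finset.sum_prod_piFinset]
    simp [hrow, Finset.prod_const]
  have hsubset : (Finset.univ.image (fun σ : Equiv.Perm (Fin k) => ⇑σ))
      ⊆ Fintype.piFinset (fun _ : Fin k => (Finset.univ : Finset (Fin k))) := by
    intro f _
    simp [Fintype.mem_piFinset]
  have himg : (∑ σ : Equiv.Perm (Fin k), ∏ i, a i (σ i))
      = ∑ p ∈ Finset.univ.image (fun σ : Equiv.Perm (Fin k) => ⇑σ), ∏ i, a i (p i) := by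
    exact (Finset.sum_image (s := (Finset.univ : Finset (Equiv.Perm (Fin k))))
      (g := fun σ : Equiv.Perm (Fin k) => (⇑σ : Fin k → Fin k))
      (f := fun p : Fin k → Fin k => ∏ i, a i (p i))
      (fun σ1 _ σ2 _ h => Equiv.coe_fn_injective h)).symm
  have hperm_le : ∑ σ : Equiv.Perm (Fin k), ∏ i, a i (σ i) ≤ lam ^ k := by
    rw [himg, ← hall]
    exact Finset.sum_le_sum_of_subset_of_nonneg hsubset
      (fun p _ _ => Finset.prod_nonneg fun i _ => hanonneg i (p i))
  have hsdiff0 : ∑ p ∈ (Fintype.piFinset (fun _ : Fin k => (Finset.univ : Finset (Fin k))))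
      \ (Finset.univ.image (fun σ : Equiv.Perm (Fin k) => ⇑σ)), ∏ i, a i (p i) = 0 := by
    have hsplit := Finset.sum_sdiff (f := fun p : Fin k → Fin k => ∏ i, a i (p i)) hsubset
    have himgval : ∑ p ∈ Finset.univ.image (fun σ : Equiv.Perm (Fin k) => ⇑σ),
        ∏ i, a i (p i) = lam ^ k := le_antisymm (himg ▸ hperm_le) (himg ▸ hexp)
    rw [himgval, hall] at hsplit
    linarith
  have hzero : ∀ p : Fin k → Fin k, ¬ Function.Injective p → ∏ i, a i (p i) = 0 := by
    intro p hp
    have hmem : p ∈ (Fintype.piFinset (fun _ : Fin k => (Finset.univ : Finset (Fin k))))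
        \ (Finset.univ.image (fun σ : Equiv.Perm (Fin k) => ⇑σ)) := by
      rw [Finset.mem_sdiff]
      constructor
      · simp [Fintype.mem_piFinset]
      · simp only [Finset.mem_image, Finset.mem_univ, true_and, not_exists]
        intro σ hσ
        exact hp (hσ ▸ σ.injective)
    exact (Finset.sum_eq_zero_iff_of_nonneg
      (fun q _ => Finset.prod_nonneg fun i _ => hanonneg i (q i))).mp hsdiff0 p hmem
  have hsel : ∀ p : Fin k → Fin k, (∀ i, 0 < a i (p i)) → Function.Injective p := by
    intro p hp
    by_contra hcon
    have h1 := hzero p hcon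
    have h2 : 0 < ∏ i, a i (p i) := Finset.prod_pos fun i _ => hp i
    linarith
  -- extract the permutation
  have hτex : ∀ i, ∃ j, 0 < a i j := by
    intro i
    by_contra hno
    push_neg at hno
    have h1 : ∑ j, a i j ≤ 0 := Finset.sum_nonpos fun j _ => hno j
    rw [hrow i] at h1
    linarith [hHA.lam_pos]
  choose τ0 hτ0 using hτex
  have hτinj : Function.Injective τ0 := hsel τ0 hτ0
  have huniq : ∀ i j, j ≠ τ0 i → a i j = 0 := by
    intro i j hj
    by_contra h
    have hpos : 0 < a i j := lt_of_le_of_ne (hanonneg i j) (Ne.symm h)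
    have hppos : ∀ l, 0 < a l (Function.update τ0 i j l) := by
      intro l
      rcases eq_or_ne l i with rfl | hl
      · simpa [Function.update_self] using hpos
      · simpa [Function.update_of_ne hl] using hτ0 l
    have hpinj := hsel _ hppos
    obtain ⟨i2, hi2⟩ := (Finite.injective_iff_bijective.mp hτinj).2 j
    have hi2ne : i2 ≠ i := by
      rintro rfl
      exact hj hi2.symm
    have heq2 : Function.update τ0 i j i2 = Function.update τ0 i j i := by
      rw [Function.update_of_ne hi2ne, Function.update_self, hi2]
    exact hi2ne (hpinj heq2)
  have haval : ∀ i, a i (τ0 i) = lam := by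
    intro i
    have h1 := hrow i
    rw [Finset.sum_eq_single (τ0 i) (fun j _ hj => huniq i j hj) (by simp)] at h1
    exact h1
  have hPgi2 : ∀ i, PR φ κ (gi i) = fun x => lam * gi (τ0 i) x := by
    intro i
    funext x
    rw [congrFun (hPRrep i) x]
    rw [Finset.sum_eq_single (τ0 i) (fun j _ hj => by rw [huniq i j hj, zero_mul]) (by simp)]
    rw [haval i]
  set τ : Equiv.Perm (Fin k) := Equiv.ofBijective τ0 (Finite.injective_iff_bijective.mp hτinj)
    with hτdef
  have hτap : ∀ i, τ i = τ0 i := fun i => rfl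
  -- τ is a k-cycle via the primitive eigenvalue
  have hcne : ev ⟨1 % k, Nat.mod_lt 1 kpos⟩ ≠ 0 := hev0 _
  have hceq : ∀ mi : Fin k, ∑ l, ((a l mi : ℝ) : ℂ) * ev ⟨1 % k, Nat.mod_lt 1 kpos⟩ l
      = ((lam : ℂ) * rootU k (1 % k)) * ev ⟨1 % k, Nat.mod_lt 1 kpos⟩ mi := by
    intro mi
    have h1 := hevEq ⟨1 % k, Nat.mod_lt 1 kpos⟩ mi
    simpa using h1
  set c : Fin k → ℂ := ev ⟨1 % k, Nat.mod_lt 1 kpos⟩ with hc_def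
  have hω_dvd : ∀ n : ℕ, rootU k (1 % k) ^ n = 1 → k ∣ n := by
    intro n hn
    rcases eq_or_lt_of_le (Nat.one_le_iff_ne_zero.mpr (NeZero.ne k)) with h1 | h2
    · exact h1 ▸ Nat.one_dvd n
    · have hmod : 1 % k = 1 := Nat.mod_eq_of_lt h2
      rw [hmod] at hn
      exact dvd_of_rootU_pow h2 hn
  have hrec : ∀ mi, c (τ.symm mi) = rootU k (1 % k) * c mi := by
    intro mi
    have h1 := hceq mi
    have h2 : ∑ l, ((a l mi : ℝ) : ℂ) * c l = ((lam : ℝ) : ℂ) * c (τ.symm mi) := by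
      rw [Finset.sum_eq_single (τ.symm mi)]
      · have hτs : τ0 (τ.symm mi) = mi := τ.apply_symm_apply mi
        have hval := haval (τ.symm mi)
        rw [hτs] at hval
        rw [hval]
      · intro l _ hl
        have hmi : mi ≠ τ0 l := by
          intro hmiv
          apply hl
          rw [← hτap l] at hmiv
          rw [hmiv, Equiv.symm_apply_apply]
        rw [huniq l mi hmi]
        simp
      · simp
    rw [h2] at h1
    have hlamne : ((lam : ℝ) : ℂ) ≠ 0 := by
      simp only [ne_eq, Complex.ofReal_eq_zero]
      exact hHA.lam_pos.ne'
    have h3 : ((lam : ℝ) : ℂ) * c (τ.symm mi)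
        = ((lam : ℝ) : ℂ) * (rootU k (1 % k) * c mi) := by
      rw [h1]
      ring
    exact mul_left_cancel₀ hlamne h3
  have hrecn : ∀ n mi, c ((τ.symm ^ n) mi) = rootU k (1 % k) ^ n * c mi := by
    intro n
    induction n with
    | zero => intro mi; simp
    | succ n ih =>
      intro mi
      have hstep : (τ.symm ^ (n + 1)) mi = (τ.symm ^ n) (τ.symm mi) := by
        rw [pow_succ]
        rfl
      rw [hstep, ih, hrec, pow_succ]
      ring
  obtain ⟨l0, hl0⟩ := Function.ne_iff.mp hcne
  have hperiod : ∀ n : ℕ, (τ ^ n) l0 = l0 → k ∣ n := by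
    intro n hn
    have hsp : τ.symm ^ n = (τ ^ n).symm := inv_pow τ n
    have h1 : (τ.symm ^ n) l0 = l0 := by
      rw [hsp, Equiv.symm_apply_eq]
      exact hn.symm
    have h2 := hrecn n l0
    rw [h1] at h2
    have h3 : rootU k (1 % k) ^ n * c l0 = 1 * c l0 := by
      rw [← h2, one_mul]
    exact hω_dvd n (mul_right_cancel₀ hl0 h3)
  have hl0p : l0 ∈ Function.periodicPts ⇑τ := by
    refine ⟨orderOf τ, orderOf_pos τ, ?_⟩
    show ⇑(τ ^ orderOf τ) l0 = l0
    rw [pow_orderOf_eq_one]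
    rfl
  have hdpos : 0 < Function.minimalPeriod ⇑τ l0 :=
    Function.minimalPeriod_pos_of_mem_periodicPts hl0p
  have hdk : k ∣ Function.minimalPeriod ⇑τ l0 :=
    hperiod _ (Function.isPeriodicPt_minimalPeriod ⇑τ l0)
  have hdle : Function.minimalPeriod ⇑τ l0 ≤ k := by
    have hinj2 := Function.iterate_injOn_Iio_minimalPeriod (f := ⇑τ) (x := l0)
    have hcard := Finset.card_le_card_of_injOn (s := Finset.range (Function.minimalPeriod ⇑τ l0))
      (t := (Finset.univ : Finset (Fin k))) (fun n => (⇑τ)^[n] l0)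
      (fun n _ => Finset.mem_univ _)
      (by rw [Finset.coe_range]; exact hinj2)
    simpa using hcard
  have hdeq : Function.minimalPeriod ⇑τ l0 = k :=
    le_antisymm hdle (Nat.le_of_dvd hdpos hdk)
  have hτk : (τ ^ k) l0 = l0 := by
    have h1 := Function.isPeriodicPt_minimalPeriod ⇑τ l0
    rw [hdeq] at h1
    exact h1
  -- build the relabelling permutation
  have hσinj : Function.Injective (fun i : Fin k => (τ.symm ^ (i : ℕ)) l0) := by
    have key2 : ∀ i1 i2 : Fin k, (i1 : ℕ) ≤ (i2 : ℕ) →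
        (τ.symm ^ (i1 : ℕ)) l0 = (τ.symm ^ (i2 : ℕ)) l0 → i1 = i2 := by
      intro i1 i2 hle he
      have h3 : (τ.symm ^ (i1 : ℕ)) ((τ.symm ^ ((i2 : ℕ) - (i1 : ℕ))) l0)
          = (τ.symm ^ (i1 : ℕ)) l0 := by
        rw [← Equiv.Perm.mul_apply, ← pow_add, Nat.add_sub_cancel' hle]
        exact he.symm
      have h2 := (τ.symm ^ (i1 : ℕ)).injective h3
      have hsp : τ.symm ^ ((i2 : ℕ) - (i1 : ℕ)) = (τ ^ ((i2 : ℕ) - (i1 : ℕ))).symm :=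
        inv_pow τ _
      rw [hsp] at h2
      have h4 : (τ ^ ((i2 : ℕ) - (i1 : ℕ))) l0 = l0 := ((Equiv.symm_apply_eq _).mp h2).symm
      have h5 := hperiod _ h4
      have h6 : (i2 : ℕ) - (i1 : ℕ) = 0 :=
        Nat.eq_zero_of_dvd_of_lt h5 (by have := i2.isLt; omega)
      exact Fin.ext (by omega)
    intro i1 i2 hi
    rcases le_total (i1 : ℕ) (i2 : ℕ) with h | h
    · exact key2 i1 i2 h hi
    · exact (key2 i2 i1 h hi.symm).symm
  refine ⟨Equiv.ofBijective _ (Finite.injective_iff_bijective.mp hσinj), ?_, ?_⟩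
  · intro i
    have hστ : τ0 ((τ.symm ^ (i : ℕ)) l0) = (τ.symm ^ ((i - 1 : Fin k) : ℕ)) l0 := by
      by_cases h0 : (i : ℕ) = 0
      · have hv : ((i - 1 : Fin k) : ℕ) = k - 1 := by
          rw [fin_sub_one_val, if_pos h0]
        rw [h0, hv]
        show τ0 ((τ.symm ^ 0) l0) = (τ.symm ^ (k - 1)) l0
        simp only [pow_zero, Equiv.Perm.coe_one, id_eq]
        have hsp : τ.symm ^ (k - 1) = (τ ^ (k - 1)).symm := inv_pow τ _
        rw [hsp]
        show τ l0 = (τ ^ (k - 1)).symm l0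
        rw [Equiv.eq_symm_apply]
        have hk1 : k - 1 + 1 = k := Nat.succ_pred_eq_of_pos kpos
        calc (τ ^ (k - 1)) (τ l0) = ((τ ^ (k - 1)) * τ) l0 := rfl
          _ = (τ ^ k) l0 := by rw [← pow_succ, hk1]
          _ = l0 := hτk
      · obtain ⟨n, hn⟩ := Nat.exists_eq_succ_of_ne_zero h0
        have hv : ((i - 1 : Fin k) : ℕ) = n := by
          rw [fin_sub_one_val, if_neg h0]
          omega
        rw [hv, hn]
        show τ0 ((τ.symm ^ (n + 1)) l0) = (τ.symm ^ n) l0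
        have hstep : τ.symm ^ (n + 1) = τ.symm * τ.symm ^ n := pow_succ' τ.symm n
        rw [hstep]
        show τ ((τ.symm * τ.symm ^ n) l0) = (τ.symm ^ n) l0
        rw [Equiv.Perm.mul_apply]
        exact τ.apply_symm_apply _
    rw [show (Equiv.ofBijective _ (Finite.injective_iff_bijective.mp hσinj)) i
      = (τ.symm ^ (i : ℕ)) l0 from rfl]
    rw [hPgi2]
    rw [hστ]
    rfl
  · -- the average formula
    have hhB : BddMeas (fun x => (1 / (k : ℝ)) * ∑ i, gi i x) :=
      bddMeas_of_continuous
        (continuous_const.mul (continuous_finset_sum _ fun i _ => hgi.cont i))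
    have hPRh : PR φ κ (fun x => (1 / (k : ℝ)) * ∑ i, gi i x)
        = fun x => lam * ((1 / (k : ℝ)) * ∑ i, gi i x) := by
      funext x
      haveI := hκfin x
      simp only [PR]
      rw [integral_const_mul]
      rw [integral_finset_sum _ (fun i _ => by
        haveI := hκfin x
        exact integrable_of_bddMeas (hgiBdd i).1
          (by simpa [Real.norm_eq_abs] using (hgiBdd i).2))]
      have hterm : ∀ i, Real.exp (φ x) * ∫ y, gi i y ∂(κ x) = lam * gi (τ0 i) x := by
        intro i
        have h1 := congrFun (hPgi2 i) x
        simpa [PR] using h1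
      have hlhs : Real.exp (φ x) * ((1 / (k : ℝ)) * ∑ i, ∫ y, gi i y ∂(κ x))
          = (1 / (k : ℝ)) * ∑ i, Real.exp (φ x) * ∫ y, gi i y ∂(κ x) := by
        calc Real.exp (φ x) * ((1 / (k : ℝ)) * ∑ i, ∫ y, gi i y ∂(κ x))
            = (1 / (k : ℝ)) * (Real.exp (φ x) * ∑ i, ∫ y, gi i y ∂(κ x)) := by ring
          _ = (1 / (k : ℝ)) * ∑ i, Real.exp (φ x) * ∫ y, gi i y ∂(κ x) := by
              rw [Finset.mul_sum]
      rw [hlhs]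
      rw [Finset.sum_congr rfl fun i _ => hterm i]
      have hsum2 : ∑ i, lam * gi (τ0 i) x = lam * ∑ i, gi i x := by
        rw [← Finset.mul_sum]
        congr 1
        have := Equiv.sum_comp τ (fun i => gi i x)
        simpa [hτap] using this
      rw [hsum2]
      ring
    obtain ⟨cr, hcr⟩ := hHA.eigen_dim _ hhB (by rw [hPRh])
    have hgh : (fun x => (1 / (k : ℝ)) * ∑ i, gi i x) = fun x => cr * g x :=
      eq_of_ae_eq_cont hfull
        (continuous_const.mul (continuous_finset_sum _ fun i _ => hgi.cont i))
        (continuous_const.mul hHA.g_cont) hcr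
    have hinth : ∫ x, (1 / (k : ℝ)) * ∑ i, gi i x ∂μ = (μ {x | 0 < g x}).toReal := by
      rw [integral_const_mul]
      rw [integral_finset_sum _ (fun i _ => hgiInt i)]
      rw [Finset.sum_congr rfl fun i _ => hgi.integral i]
      rw [Finset.sum_const, Finset.card_univ, Fintype.card_fin, nsmul_eq_mul]
      have hkne : (k : ℝ) ≠ 0 := Nat.cast_ne_zero.mpr (NeZero.ne k)
      field_simp
    have hcrm : (μ {x | 0 < g x}).toReal = cr * (μ {x | 0 < g x}).toReal := by
      have h2 : ∫ x, (1 / (k : ℝ)) * ∑ i, gi i x ∂μ = cr * (μ {x | 0 < g x}).toReal := by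
        rw [show (∫ x, (1 / (k : ℝ)) * ∑ i, gi i x ∂μ) = ∫ x, cr * g x ∂μ by
          rw [hgh]]
        rw [integral_const_mul, hHA.g_int]
      conv_lhs => rw [← hinth]
      exact h2
    have hcr1 : cr = 1 := by
      have h1 : cr * (μ {x | 0 < g x}).toReal = 1 * (μ {x | 0 < g x}).toReal := by
        rw [one_mul, ← hcrm]
      exact mul_right_cancel₀ hmpos.ne' h1
    have hgeq : g = fun x => (1 / (k : ℝ)) * ∑ i, gi i x := by
      rw [hgh, hcr1]
      funext x
      ring
    rw [hgeq]
    funext x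
    congr 1
    exact (Equiv.sum_comp (Equiv.ofBijective _ (Finite.injective_iff_bijective.mp hσinj))
      (fun i => gi i x)).symm


end

end QEM
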